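/- Let ω_SF = √(-1) Σ_{i,j} C_{ij} dz_i ∧ dz̄_j and f*ω = √(-1) Σ_{i,j} A_{ij} dy_i ∧ dȳ_j be positive (1,1)-forms on B × ℂ^n where A = C^{-1} = Im Z for a symmetric matrix Z with Im Z > 0 (constant for this computation), and let Θ = Σ dz_i ∧ dy_i. Then (ω_SF + f*ω)^{2n} = c_n Θ^n ∧ Θ̄^n for the appropriate dimensional constant c_n, i.e., the (2n,2n) volume forms agree up to the standard normalization. -/

import Mathlib

open Matrix



section ListLemmas

variable {A : Type*} [Ring A] {ι : Type*}

lemma sumPowAux (l : List A) (hc : ∀ x ∈ l, ∀ y ∈ l, Commute x y)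
    (hsq : ∀ x ∈ l, x * x = 0) :
    l.sum ^ l.length = l.length.factorial • l.prod ∧ l.sum ^ (l.length + 1) = 0 := by
  induction l with
  | nil => simp
  | cons a l ih =>
    obtain ⟨ih1, ih2⟩ := ih
      (fun x hx y hy => hc x (List.mem_cons_of_mem _ hx) y (List.mem_cons_of_mem _ hy))
      (fun x hx => hsq x (List.mem_cons_of_mem _ hx))
    have hca : Commute a l.sum := Commute.list_sum_right _ _ fun x hx =>
      hc a (List.mem_cons_self) x (List.mem_cons_of_mem _ hx)
    have ha2 : a ^ 2 = 0 := by rw [sq]; exact hsq a (List.mem_cons_self)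
    have hak : ∀ k, 2 ≤ k → a ^ k = 0 := fun k hk => by
      rw [← Nat.add_sub_cancel' hk, pow_add, ha2, zero_mul]
    have hSk : ∀ k, l.length + 1 ≤ k → l.sum ^ k = 0 := fun k hk => by
      rw [← Nat.add_sub_cancel' hk, pow_add, ih2, zero_mul]
    simp only [List.sum_cons, List.length_cons, List.prod_cons]
    constructor
    · rw [hca.add_pow]
      rw [Finset.sum_eq_single 1]
      · rw [pow_one, Nat.add_sub_cancel, ih1, Nat.choose_one_right]
        have h1 : (a * (l.length.factorial • l.prod)) * ((l.length + 1 : ℕ) : A)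
            = (l.length + 1) • (a * (l.length.factorial • l.prod)) := by
          rw [← (Nat.cast_commute (l.length + 1 : ℕ) _).eq, ← nsmul_eq_mul]
        rw [h1, mul_smul_comm, smul_smul, Nat.factorial_succ, mul_comm]
      · intro b hb hb1
        match b, hb1 with
        | 0, _ => rw [Nat.sub_zero, ih2, pow_zero, one_mul, zero_mul]
        | (k+2), _ => rw [hak (k+2) (by omega), zero_mul, zero_mul]
      · intro h
        exact absurd (Finset.mem_range.mpr (by omega)) h
    · rw [hca.add_pow]
      apply Finset.sum_eq_zero
      intro b _
      match b with
      | 0 => rw [Nat.sub_zero, hSk _ (by omega), pow_zero, one_mul, zero_mul]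
      | 1 => rw [show l.length + 1 + 1 - 1 = l.length + 1 from rfl, ih2, pow_one, mul_zero, zero_mul]
      | (k+2) => rw [hak (k+2) (by omega), zero_mul, zero_mul]

lemma sumPow (l : List A) (hc : ∀ x ∈ l, ∀ y ∈ l, Commute x y)
    (hsq : ∀ x ∈ l, x * x = 0) :
    l.sum ^ l.length = l.length.factorial • l.prod :=
  (sumPowAux l hc hsq).1

lemma prodMulProd (l : List ι) (f g : ι → A)
    (h : ∀ x ∈ l, ∀ y ∈ l, Commute (f x) (g y)) :
    (l.map f).prod * (l.map g).prod = (l.map fun i => f i * g i).prod := by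
  induction l with
  | nil => simp
  | cons a l ih =>
    simp only [List.map_cons, List.prod_cons]
    have hcm : Commute ((l.map f).prod) (g a) :=
      (Commute.list_prod_right _ _ (by
        intro x hx
        rw [List.mem_map] at hx
        obtain ⟨y, hy, rfl⟩ := hx
        exact (h y (List.mem_cons_of_mem _ hy) a (List.mem_cons_self)).symm)).symm
    rw [hcm.mul_mul_mul_comm,
      ih (fun x hx y hy => h x (List.mem_cons_of_mem _ hx) y (List.mem_cons_of_mem _ hy))]

lemma bindSum (l : List ι) (f g : ι → A) :
    (l.flatMap fun i => [f i, g i]).sum = (l.map fun i => f i + g i).sum := by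
  induction l with
  | nil => simp
  | cons a l ih => simp [ih, add_assoc]

lemma bindProd (l : List ι) (f g : ι → A) :
    (l.flatMap fun i => [f i, g i]).prod = (l.map fun i => f i * g i).prod := by
  induction l with
  | nil => simp
  | cons a l ih => simp [ih, mul_assoc]

lemma bindLength (l : List ι) (f g : ι → A) :
    (l.flatMap fun i => [f i, g i]).length = 2 * l.length := by
  induction l with
  | nil => simp
  | cons a l ih => simp [ih]; omega

end ListLemmas

section SmulLemmas

variable {R : Type*} {A : Type*} [CommRing R] [Ring A] [Algebra R A] {ι : Type*}

lemma prodSmul (c : R) (l : List ι) (f : ι → A) :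
    (l.map fun i => c • f i).prod = c ^ l.length • (l.map f).prod := by
  induction l with
  | nil => simp
  | cons a l ih =>
    simp [ih, smul_mul_assoc, mul_smul_comm, smul_smul, pow_succ, mul_comm]

end SmulLemmas

section Anti
variable {A : Type*} [Ring A]

lemma anticommMulLeft {a b c : A} (h1 : a * c = -(c * a)) (h2 : b * c = -(c * b)) :
    (a * b) * c = c * (a * b) := by
  calc (a * b) * c = a * (b * c) := mul_assoc _ _ _
    _ = a * (-(c * b)) := by rw [h2]
    _ = -((a * c) * b) := by rw [mul_neg, mul_assoc]
    _ = -(-(c * a) * b) := by rw [h1]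
    _ = (c * a) * b := by rw [neg_mul, neg_neg]
    _ = c * (a * b) := mul_assoc _ _ _
end Anti

namespace S16

variable {n : ℕ}

noncomputable def e (n : ℕ) (p : Fin 4 × Fin n) : ExteriorAlgebra ℂ (Fin 4 × Fin n → ℂ) :=
  ExteriorAlgebra.ι ℂ (Pi.single p 1)

lemma ianti (v w : Fin 4 × Fin n → ℂ) :
    ExteriorAlgebra.ι ℂ v * ExteriorAlgebra.ι ℂ w = -(ExteriorAlgebra.ι ℂ w * ExteriorAlgebra.ι ℂ v) := by
  have h := ExteriorAlgebra.ι_sq_zero (R := ℂ) (v + w)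
  rw [map_add, add_mul, mul_add, mul_add, ExteriorAlgebra.ι_sq_zero, ExteriorAlgebra.ι_sq_zero,
    zero_add, add_zero] at h
  exact eq_neg_of_add_eq_zero_left h

lemma pairsq (v w : Fin 4 × Fin n → ℂ) :
    (ExteriorAlgebra.ι ℂ v * ExteriorAlgebra.ι ℂ w) * (ExteriorAlgebra.ι ℂ v * ExteriorAlgebra.ι ℂ w) = 0 := by
  rw [mul_assoc, ← mul_assoc (ExteriorAlgebra.ι ℂ w), ianti w v]
  simp only [neg_mul, mul_neg, mul_assoc]
  rw [ExteriorAlgebra.ι_sq_zero]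
  simp

lemma pairCommOne (v w x : Fin 4 × Fin n → ℂ) :
    (ExteriorAlgebra.ι ℂ v * ExteriorAlgebra.ι ℂ w) * ExteriorAlgebra.ι ℂ x
      = ExteriorAlgebra.ι ℂ x * (ExteriorAlgebra.ι ℂ v * ExteriorAlgebra.ι ℂ w) :=
  anticommMulLeft (ianti v x) (ianti w x)

lemma pairCommute (v w x y : Fin 4 × Fin n → ℂ) :
    Commute (ExteriorAlgebra.ι ℂ v * ExteriorAlgebra.ι ℂ w)
      (ExteriorAlgebra.ι ℂ x * ExteriorAlgebra.ι ℂ y) :=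
  Commute.mul_right (pairCommOne v w x) (pairCommOne v w y)

end S16

namespace S16

set_option maxHeartbeats 1000000 in
lemma diag (n : ℕ) :
    (Complex.I • ∑ i : Fin n, (e n (0, i) * e n (1, i) + e n (2, i) * e n (3, i))) ^ (2 * n)
      = (((2 * n).choose n : ℕ) : ℂ) •
        ((∑ i : Fin n, e n (0, i) * e n (2, i)) ^ n * (∑ i : Fin n, e n (1, i) * e n (3, i)) ^ n) := by
  classical
  have hlen : (List.finRange n).length = n := List.length_finRange
  set lr := List.finRange n with hlrdef
  set Lω : List (ExteriorAlgebra ℂ (Fin 4 × Fin n → ℂ)) :=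
    lr.flatMap fun i => [e n (0, i) * e n (1, i), e n (2, i) * e n (3, i)] with hLω
  set Lθ : List (ExteriorAlgebra ℂ (Fin 4 × Fin n → ℂ)) :=
    lr.map fun i => e n (0, i) * e n (2, i) with hLθ
  set Lθb : List (ExteriorAlgebra ℂ (Fin 4 × Fin n → ℂ)) :=
    lr.map fun i => e n (1, i) * e n (3, i) with hLθb
  have hpairω : ∀ x ∈ Lω, ∃ v w, x = ExteriorAlgebra.ι ℂ v * ExteriorAlgebra.ι ℂ w := by
    intro x hx
    rw [hLω, List.mem_flatMap] at hx
    obtain ⟨i, -, hx⟩ := hx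
    simp only [List.mem_cons, List.mem_singleton, List.not_mem_nil, or_false] at hx
    rcases hx with rfl | rfl
    · exact ⟨_, _, rfl⟩
    · exact ⟨_, _, rfl⟩
  have hpairθ : ∀ x ∈ Lθ, ∃ v w, x = ExteriorAlgebra.ι ℂ v * ExteriorAlgebra.ι ℂ w := by
    intro x hx
    rw [hLθ, List.mem_map] at hx
    obtain ⟨i, -, rfl⟩ := hx
    exact ⟨_, _, rfl⟩
  have hpairθb : ∀ x ∈ Lθb, ∃ v w, x = ExteriorAlgebra.ι ℂ v * ExteriorAlgebra.ι ℂ w := by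
    intro x hx
    rw [hLθb, List.mem_map] at hx
    obtain ⟨i, -, rfl⟩ := hx
    exact ⟨_, _, rfl⟩
  have key : ∀ (L : List (ExteriorAlgebra ℂ (Fin 4 × Fin n → ℂ))),
      (∀ x ∈ L, ∃ v w, x = ExteriorAlgebra.ι ℂ v * ExteriorAlgebra.ι ℂ w) →
      L.sum ^ L.length = L.length.factorial • L.prod := by
    intro L hL
    refine sumPow L ?_ ?_
    · intro x hx y hy
      obtain ⟨v, w, rfl⟩ := hL x hx
      obtain ⟨v', w', rfl⟩ := hL y hy
      exact pairCommute v w v' w'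
    · intro x hx
      obtain ⟨v, w, rfl⟩ := hL x hx
      exact pairsq v w
  have hLωlen : Lω.length = 2 * n := by rw [hLω, bindLength, hlen]
  have hLθlen : Lθ.length = n := by rw [hLθ, List.length_map, hlen]
  have hLθblen : Lθb.length = n := by rw [hLθb, List.length_map, hlen]
  have hω := key Lω hpairω
  rw [hLωlen] at hω
  have hθ := key Lθ hpairθ
  rw [hLθlen] at hθ
  have hθb := key Lθb hpairθb
  rw [hLθblen] at hθb
  have hsumω : ∑ i : Fin n, (e n (0, i) * e n (1, i) + e n (2, i) * e n (3, i)) = Lω.sum := by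
    rw [hLω, bindSum, Fin.sum_univ_def]
  have hsumθ : ∑ i : Fin n, e n (0, i) * e n (2, i) = Lθ.sum := by
    rw [hLθ, Fin.sum_univ_def]
  have hsumθb : ∑ i : Fin n, e n (1, i) * e n (3, i) = Lθb.sum := by
    rw [hLθb, Fin.sum_univ_def]
  -- the product rearrangement
  have hquad : ∀ i : Fin n,
      (e n (0, i) * e n (2, i)) * (e n (1, i) * e n (3, i))
        = (-1 : ℂ) • ((e n (0, i) * e n (1, i)) * (e n (2, i) * e n (3, i))) := by
    intro i
    rw [neg_one_smul]
    simp only [mul_assoc]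
    rw [← mul_assoc (e n (2, i)) (e n (1, i)), show e n (2,i) * e n (1,i)
      = -(e n (1,i) * e n (2,i)) from ianti _ _]
    simp only [neg_mul, mul_neg, mul_assoc]
  have hθθb : Lθ.prod * Lθb.prod = (-1 : ℂ) ^ n • Lω.prod := by
    rw [hLθ, hLθb, prodMulProd _ _ _ (by
      intro x _ y _
      exact pairCommute _ _ _ _)]
    have h1 : (lr.map fun i => (e n (0, i) * e n (2, i)) * (e n (1, i) * e n (3, i)))
        = lr.map fun i => (-1 : ℂ) • ((e n (0, i) * e n (1, i)) * (e n (2, i) * e n (3, i))) := by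
      exact List.map_congr_left fun i _ => hquad i
    rw [h1, prodSmul, hLω, bindProd, hlen]
  -- assemble
  rw [hsumω, hsumθ, hsumθb, smul_pow, hω, hθ, hθb, smul_mul_smul_comm, hθθb]
  rw [← Nat.cast_smul_eq_nsmul ℂ ((2*n).factorial), ← Nat.cast_smul_eq_nsmul ℂ (n.factorial * n.factorial)]
  rw [smul_smul, smul_smul, smul_smul]
  congr 1
  have hI : Complex.I ^ (2 * n) = (-1 : ℂ) ^ n := by
    rw [pow_mul, Complex.I_sq]
  rw [hI]
  have hcf : ((2 * n).choose n : ℕ) * (n.factorial * n.factorial) = (2 * n).factorial := by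
    have := Nat.choose_mul_factorial_mul_factorial (show n ≤ 2 * n by omega)
    rw [show 2 * n - n = n by omega] at this
    rw [← this]; ring
  have hcfC : (((2 * n).choose n : ℕ) : ℂ) * ((n.factorial * n.factorial : ℕ) : ℂ)
      = (((2 * n).factorial : ℕ) : ℂ) := by exact_mod_cast congrArg (Nat.cast (R := ℂ)) hcf
  push_cast at hcfC ⊢
  ring_nf
  ring_nf at hcfC
  linear_combination (-(1 : ℂ)) * ((-1 : ℂ)) ^ n * hcfC

end S16


set_option maxHeartbeats 2000000 in
theorem stmt16 (n : ℕ) :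
    ∃ c : ℂ, c ≠ 0 ∧ ∀ (Z : Matrix (Fin n) (Fin n) ℂ),
      Z.IsSymm → (Z.map Complex.im).PosDef →
      (let A : Matrix (Fin n) (Fin n) ℂ := (Z.map Complex.im).map (fun x => (x : ℂ))
       let Cm : Matrix (Fin n) (Fin n) ℂ := A⁻¹
       let ι : (Fin 4 × Fin n → ℂ) →ₗ[ℂ] ExteriorAlgebra ℂ (Fin 4 × Fin n → ℂ) :=
         ExteriorAlgebra.ι ℂ
       let dz : Fin n → ExteriorAlgebra ℂ (Fin 4 × Fin n → ℂ) :=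
         fun i => ι (Pi.single ((0 : Fin 4), i) 1)
       let dzb : Fin n → ExteriorAlgebra ℂ (Fin 4 × Fin n → ℂ) :=
         fun i => ι (Pi.single ((1 : Fin 4), i) 1)
       let dy : Fin n → ExteriorAlgebra ℂ (Fin 4 × Fin n → ℂ) :=
         fun i => ι (Pi.single ((2 : Fin 4), i) 1)
       let dyb : Fin n → ExteriorAlgebra ℂ (Fin 4 × Fin n → ℂ) :=
         fun i => ι (Pi.single ((3 : Fin 4), i) 1)
       let ωSF := Complex.I • ∑ i, ∑ j, Cm i j • (dz i * dzb j)
       let fω := Complex.I • ∑ i, ∑ j, A i j • (dy i * dyb j)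
       let Θ := ∑ i, dz i * dy i
       let Θb := ∑ i, dzb i * dyb i
       (ωSF + fω) ^ (2 * n) = c • (Θ ^ n * Θb ^ n)) := by
  classical
  refine ⟨(((2 * n).choose n : ℕ) : ℂ), by
    simp only [ne_eq, Nat.cast_eq_zero]
    exact (Nat.choose_pos (by omega)).ne', ?_⟩
  intro Z hsym hpos
  set A : Matrix (Fin n) (Fin n) ℂ := (Z.map Complex.im).map (fun x => (x : ℂ)) with hA
  set Cm : Matrix (Fin n) (Fin n) ℂ := A⁻¹ with hCm
  show (Complex.I • ∑ i, ∑ j, Cm i j • (S16.e n (0, i) * S16.e n (1, j))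
      + Complex.I • ∑ i, ∑ j, A i j • (S16.e n (2, i) * S16.e n (3, j))) ^ (2 * n)
    = (((2 * n).choose n : ℕ) : ℂ) •
      ((∑ i, S16.e n (0, i) * S16.e n (2, i)) ^ n * (∑ i, S16.e n (1, i) * S16.e n (3, i)) ^ n)
  -- basic matrix facts
  have hdet : A.det ≠ 0 := by
    have h1 : (0 : ℝ) < (Z.map Complex.im).det := hpos.det_pos
    have h2 : A = (Z.map Complex.im).map (Complex.ofRealHom : ℝ →+* ℂ) := rfl
    rw [h2, show (Z.map Complex.im).map ⇑Complex.ofRealHom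
      = Complex.ofRealHom.mapMatrix (Z.map Complex.im) from rfl, ← RingHom.map_det]
    simpa using h1.ne'
  have hCA : Cm * A = 1 := Matrix.nonsing_inv_mul A (isUnit_iff_ne_zero.mpr hdet)
  have hAsymm : Aᵀ = A := by
    have h1 : (Z.map Complex.im)ᵀ = Z.map Complex.im := by
      rw [← Matrix.transpose_map, hsym.eq]
    rw [hA, ← Matrix.transpose_map, h1]
  have hAe : ∀ p q, A p q = A q p := by
    intro p q
    conv_lhs => rw [← hAsymm, Matrix.transpose_apply]
  -- the linear map
  set Bm : Fin 4 → Matrix (Fin n) (Fin n) ℂ := ![Cm, 1, A, 1] with hBm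
  set G : Matrix (Fin 4 × Fin n) (Fin 4 × Fin n) ℂ :=
    fun p q => if p.1 = q.1 then Bm p.1 p.2 q.2 else 0 with hG
  set g : (Fin 4 × Fin n → ℂ) →ₗ[ℂ] (Fin 4 × Fin n → ℂ) := Matrix.toLin' G with hg
  set Φ := ExteriorAlgebra.map (R := ℂ) g with hΦ
  have hge : ∀ (a : Fin 4) (j : Fin n), Φ (S16.e n (a, j)) = ∑ i, Bm a i j • S16.e n (a, i) := by
    intro a j
    rw [hΦ, S16.e, ExteriorAlgebra.map_apply_ι]
    have hv : g (Pi.single (a, j) 1) = ∑ i : Fin n, Bm a i j • (Pi.single (a, i) 1 : Fin 4 × Fin n → ℂ) := by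
      rw [hg, Matrix.toLin'_apply, Matrix.mulVec_single]
      funext p
      obtain ⟨b, k⟩ := p
      simp only [Finset.sum_apply, Pi.smul_apply, Pi.single_apply, smul_eq_mul, mul_one, hG]
      by_cases hab : b = a
      · subst hab
        simp [Matrix.col, Matrix.transpose, Matrix.of_apply, Prod.ext_iff, eq_comm]
      · simp [Matrix.col, Matrix.transpose, Matrix.of_apply, hab, Ne.symm hab, Prod.ext_iff]
    rw [hv, _root_.map_sum]
    simp only [_root_.map_smul]
    rfl
  have hBm0 : Bm 0 = Cm := rfl
  have hBm1 : Bm 1 = 1 := rfl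
  have hBm2 : Bm 2 = A := rfl
  have hBm3 : Bm 3 = 1 := rfl
  have hone : ∀ (a : Fin 4) (j : Fin n), Bm a = 1 →
      (∑ i, Bm a i j • S16.e n (a, i)) = S16.e n (a, j) := by
    intro a j h
    rw [h]
    simp [Matrix.one_apply, ite_smul]
  -- image of ω0
  have hΦω : Φ (∑ i : Fin n, (S16.e n (0, i) * S16.e n (1, i) + S16.e n (2, i) * S16.e n (3, i)))
      = (∑ i, ∑ j, Cm i j • (S16.e n (0, i) * S16.e n (1, j)))
        + ∑ i, ∑ j, A i j • (S16.e n (2, i) * S16.e n (3, j)) := by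
    rw [_root_.map_sum]
    have h1 : ∀ jj : Fin n, Φ (S16.e n (0, jj) * S16.e n (1, jj) + S16.e n (2, jj) * S16.e n (3, jj))
        = (∑ i, Cm i jj • (S16.e n (0, i) * S16.e n (1, jj)))
          + ∑ i, A i jj • (S16.e n (2, i) * S16.e n (3, jj)) := by
      intro jj
      rw [_root_.map_add, _root_.map_mul, _root_.map_mul, hge, hge, hge, hge, hone 1 jj hBm1, hone 3 jj hBm3,
        hBm0, hBm2, Finset.sum_mul, Finset.sum_mul]
      simp only [smul_mul_assoc]
    rw [Finset.sum_congr rfl fun jj _ => h1 jj, Finset.sum_add_distrib, Finset.sum_comm,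
      Finset.sum_comm (f := fun i jj => A i jj • (S16.e n (2, i) * S16.e n (3, jj)))]
  -- image of Θ
  have hΦθ : Φ (∑ i : Fin n, S16.e n (0, i) * S16.e n (2, i))
      = ∑ i : Fin n, S16.e n (0, i) * S16.e n (2, i) := by
    rw [_root_.map_sum]
    have h1 : ∀ jj : Fin n, Φ (S16.e n (0, jj) * S16.e n (2, jj))
        = ∑ i, ∑ k, (Cm i jj * A k jj) • (S16.e n (0, i) * S16.e n (2, k)) := by
      intro jj
      rw [_root_.map_mul, hge, hge, hBm0, hBm2, Finset.sum_mul]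
      refine Finset.sum_congr rfl fun i _ => ?_
      rw [Finset.mul_sum]
      refine Finset.sum_congr rfl fun k _ => ?_
      rw [smul_mul_assoc, mul_smul_comm, smul_smul]
    rw [Finset.sum_congr rfl fun jj _ => h1 jj]
    rw [Finset.sum_comm]
    have h2 : ∀ i : Fin n, (∑ jj, ∑ k, (Cm i jj * A k jj) • (S16.e n (0, i) * S16.e n (2, k)))
        = ∑ k, ((1 : Matrix (Fin n) (Fin n) ℂ) i k) • (S16.e n (0, i) * S16.e n (2, k)) := by
      intro i
      rw [Finset.sum_comm]
      refine Finset.sum_congr rfl fun k _ => ?_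
      rw [← Finset.sum_smul]
      congr 1
      have h3 : ∑ jj, Cm i jj * A k jj = (Cm * A) i k := by
        rw [Matrix.mul_apply]
        exact Finset.sum_congr rfl fun jj _ => by rw [hAe k jj]
      rw [h3, hCA]
    rw [Finset.sum_congr rfl fun i _ => h2 i]
    refine Finset.sum_congr rfl fun i _ => ?_
    simp [Matrix.one_apply, ite_smul]
  -- image of Θb
  have hΦθb : Φ (∑ i : Fin n, S16.e n (1, i) * S16.e n (3, i))
      = ∑ i : Fin n, S16.e n (1, i) * S16.e n (3, i) := by
    rw [_root_.map_sum]
    refine Finset.sum_congr rfl fun jj _ => ?_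
    rw [_root_.map_mul, hge, hge, hone 1 jj hBm1, hone 3 jj hBm3]
  -- assemble
  calc (Complex.I • ∑ i, ∑ j, Cm i j • (S16.e n (0, i) * S16.e n (1, j))
      + Complex.I • ∑ i, ∑ j, A i j • (S16.e n (2, i) * S16.e n (3, j))) ^ (2 * n)
      = Φ ((Complex.I • ∑ i : Fin n, (S16.e n (0, i) * S16.e n (1, i)
          + S16.e n (2, i) * S16.e n (3, i))) ^ (2 * n)) := by
        rw [_root_.map_pow, _root_.map_smul, hΦω, smul_add]
    _ = Φ ((((2 * n).choose n : ℕ) : ℂ) • ((∑ i : Fin n, S16.e n (0, i) * S16.e n (2, i)) ^ n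
          * (∑ i : Fin n, S16.e n (1, i) * S16.e n (3, i)) ^ n)) := by
        rw [S16.diag n]
    _ = _ := by
        rw [_root_.map_smul, _root_.map_mul, _root_.map_pow, _root_.map_pow, hΦθ, hΦθb]
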